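/- arXiv:2111.07261 — 3 statements merged into one kernel-verified Lean document; each statement's English description precedes it below -/
import Mathlib

section
/- Reformulation of the Euler–Lagrange equation as a geometric wave equation (Proposition 2.1). Suppose φ is smooth, g > 0 and g̊ > 0 everywhere, and φ satisfies the Euler–Lagrange equation ∂_u(∂_ūφ·g^{−1/2}) + ∂_ū((∂_uφ + Ψ'(u) − (Ψ'(u))²·∂_ūφ)·g^{−1/2}) = 0. Then at every point Box_g φ = S₀, where S₀ := (g̊/g²)·(1−g)·(Ψ'(u))²·∂_ū²φ + (1/g²)·(g̊−g)·Ψ'(u)·∂_uφ·∂_ū²φ − (g̊/g²)·(Ψ'(u))³·∂_ūφ·∂_ū²φ + (g̊/g²)·Ψ'(u)·∂_ūφ·∂_ū∂_uφ + (2(g̊−1)/g)·∂_u∂_ūφ + (1/g)·Ψ'(u)·∂_ūφ·∂_u∂_ūφ + (1/g)·Ψ''(u)·(∂_ūφ)² − (g̊/√g)·(Ψ'(u))²·∂_ūφ·∂_ū(g^{−1/2}) + ((g̊−1)/√g)·∂_ūφ·∂_u(g^{−1/2}) + ((g̊−1)/√g)·∂_uφ·∂_ū(g^{−1/2}) + (1/√g)·Ψ'(u)·(∂_ūφ)²·∂_u(g^{−1/2})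 − (1/√g)·Ψ'(u)·∂_ūφ·∂_uφ·∂_ū(g^{−1/2}). -/
noncomputable section

/-- partial derivative in the first variable (`∂_u`) -/
def pd1 (f : ℝ × ℝ → ℝ) (p : ℝ × ℝ) : ℝ := deriv (fun s => f (s, p.2)) p.1

/-- partial derivative in the second variable (`∂_ū`) -/
def pd2 (f : ℝ × ℝ → ℝ) (p : ℝ × ℝ) : ℝ := deriv (fun s => f (p.1, s)) p.2

/-- the determinant `g = 1 − 2∂_uφ∂_ūφ − 2Ψ'(u)∂_ūφ + (Ψ'(u))²(∂_ūφ)²` -/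
def gmet (Ψ : ℝ → ℝ) (φ : ℝ × ℝ → ℝ) (p : ℝ × ℝ) : ℝ :=
  1 - 2 * pd1 φ p * pd2 φ p - 2 * deriv Ψ p.1 * pd2 φ p
    + (deriv Ψ p.1)^2 * (pd2 φ p)^2

/-- the linear-truncation determinant `g̊ = (1 − Ψ'(u)∂_ūφ)²` -/
def gring (Ψ : ℝ → ℝ) (φ : ℝ × ℝ → ℝ) (p : ℝ × ℝ) : ℝ :=
  (1 - deriv Ψ p.1 * pd2 φ p)^2

/-- inverse metric component `g^{uu} = −(∂_ūφ)²/g` -/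
def guu (Ψ : ℝ → ℝ) (φ : ℝ × ℝ → ℝ) (p : ℝ × ℝ) : ℝ :=
  -(pd2 φ p)^2 / gmet Ψ φ p

/-- inverse metric component `g^{uū} = g^{ūu} = (−1 + Ψ'(u)∂_ūφ + ∂_uφ∂_ūφ)/g` -/
def guub (Ψ : ℝ → ℝ) (φ : ℝ × ℝ → ℝ) (p : ℝ × ℝ) : ℝ :=
  (-1 + deriv Ψ p.1 * pd2 φ p + pd1 φ p * pd2 φ p) / gmet Ψ φ p

/-- inverse metric component `g^{ūū} = −(2Ψ'(u) + ∂_uφ)∂_uφ/g` -/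
def gubub (Ψ : ℝ → ℝ) (φ : ℝ × ℝ → ℝ) (p : ℝ × ℝ) : ℝ :=
  -((2 * deriv Ψ p.1 + pd1 φ p) * pd1 φ p) / gmet Ψ φ p

/-- `g^{−1/2}` as a function of the point -/
def invSqrtg (Ψ : ℝ → ℝ) (φ : ℝ × ℝ → ℝ) (p : ℝ × ℝ) : ℝ :=
  (Real.sqrt (gmet Ψ φ p))⁻¹

/-- the Euler–Lagrange expression
`∂_u(∂_ūφ·g^{−1/2}) + ∂_ū((∂_uφ + Ψ'(u) − (Ψ'(u))²∂_ūφ)·g^{−1/2})` -/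
def ELexpr (Ψ : ℝ → ℝ) (φ : ℝ × ℝ → ℝ) (p : ℝ × ℝ) : ℝ :=
  pd1 (fun q => pd2 φ q * invSqrtg Ψ φ q) p
  + pd2 (fun q => (pd1 φ q + deriv Ψ q.1 - (deriv Ψ q.1)^2 * pd2 φ q) * invSqrtg Ψ φ q) p

/-- the Laplace–Beltrami operator `□_g φ` -/
def BoxG (Ψ : ℝ → ℝ) (φ : ℝ × ℝ → ℝ) (p : ℝ × ℝ) : ℝ :=
  invSqrtg Ψ φ p *
    (pd1 (fun q => Real.sqrt (gmet Ψ φ q) * (guu Ψ φ q * pd1 φ q + guub Ψ φ q * pd2 φ q)) p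
     + pd2 (fun q => Real.sqrt (gmet Ψ φ q) * (guub Ψ φ q * pd1 φ q + gubub Ψ φ q * pd2 φ q)) p)

/-- the source term `S₀(∂²φ,∂φ)` of Proposition 2.1 -/
def S0expr (Ψ : ℝ → ℝ) (φ : ℝ × ℝ → ℝ) (p : ℝ × ℝ) : ℝ :=
  (gring Ψ φ p / (gmet Ψ φ p)^2) * (1 - gmet Ψ φ p) * (deriv Ψ p.1)^2 * pd2 (pd2 φ) p
  + (1 / (gmet Ψ φ p)^2) * (gring Ψ φ p - gmet Ψ φ p) * deriv Ψ p.1 * pd1 φ p * pd2 (pd2 φ) p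
  - (gring Ψ φ p / (gmet Ψ φ p)^2) * (deriv Ψ p.1)^3 * pd2 φ p * pd2 (pd2 φ) p
  + (gring Ψ φ p / (gmet Ψ φ p)^2) * deriv Ψ p.1 * pd2 φ p * pd2 (pd1 φ) p
  + (2 * (gring Ψ φ p - 1) / gmet Ψ φ p) * pd1 (pd2 φ) p
  + (1 / gmet Ψ φ p) * deriv Ψ p.1 * pd2 φ p * pd1 (pd2 φ) p
  + (1 / gmet Ψ φ p) * deriv (deriv Ψ) p.1 * (pd2 φ p)^2
  - (gring Ψ φ p / Real.sqrt (gmet Ψ φ p)) * (deriv Ψ p.1)^2 * pd2 φ p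
      * pd2 (invSqrtg Ψ φ) p
  + ((gring Ψ φ p - 1) / Real.sqrt (gmet Ψ φ p)) * pd2 φ p * pd1 (invSqrtg Ψ φ) p
  + ((gring Ψ φ p - 1) / Real.sqrt (gmet Ψ φ p)) * pd1 φ p * pd2 (invSqrtg Ψ φ) p
  + (1 / Real.sqrt (gmet Ψ φ p)) * deriv Ψ p.1 * (pd2 φ p)^2 * pd1 (invSqrtg Ψ φ) p
  - (1 / Real.sqrt (gmet Ψ φ p)) * deriv Ψ p.1 * pd2 φ p * pd1 φ p * pd2 (invSqrtg Ψ φ) p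

/-- the alternative source term `S̃₀(∂²φ,∂φ)` of Proposition A.1 -/
def S0tilde (Ψ : ℝ → ℝ) (φ : ℝ × ℝ → ℝ) (p : ℝ × ℝ) : ℝ :=
  (1 / (gmet Ψ φ p)^2) * (1 - gmet Ψ φ p) * (deriv Ψ p.1)^2 * pd2 (pd2 φ) p
  + (1 / (gmet Ψ φ p)^2) * (1 - gmet Ψ φ p) * deriv Ψ p.1 * pd1 φ p * pd2 (pd2 φ) p
  - (1 / (gmet Ψ φ p)^2) * (deriv Ψ p.1)^3 * pd2 φ p * pd2 (pd2 φ) p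
  + (1 / (gmet Ψ φ p)^2) * deriv Ψ p.1 * pd2 φ p * pd2 (pd1 φ) p
  + (1 / gmet Ψ φ p) * deriv Ψ p.1 * pd2 φ p * pd1 (pd2 φ) p
  - (1 / Real.sqrt (gmet Ψ φ p)) * (deriv Ψ p.1)^2 * pd2 φ p * pd2 (invSqrtg Ψ φ) p
  + (1 / gmet Ψ φ p) * deriv (deriv Ψ) p.1 * (pd2 φ p)^2
  + (1 / Real.sqrt (gmet Ψ φ p)) * deriv Ψ p.1 * (pd2 φ p)^2 * pd1 (invSqrtg Ψ φ) p
  - (1 / Real.sqrt (gmet Ψ φ p)) * deriv Ψ p.1 * pd2 φ p * pd1 φ p * pd2 (invSqrtg Ψ φ) p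


lemma one_le_top' : ((⊤ : ℕ∞) : WithTop ℕ∞) ≠ 0 := by
  simp

lemma top_add_one_le : ((⊤ : ℕ∞) : WithTop ℕ∞) + 1 ≤ ((⊤ : ℕ∞) : WithTop ℕ∞) := by
  norm_cast



lemma sliceH {f : ℝ × ℝ → ℝ} (hf : ContDiff ℝ (⊤ : ℕ∞) f) (y : ℝ) :
    ContDiff ℝ (⊤ : ℕ∞) (fun s => f (s, y)) :=
  hf.comp (contDiff_id.prodMk contDiff_const)

lemma sliceV {f : ℝ × ℝ → ℝ} (hf : ContDiff ℝ (⊤ : ℕ∞) f) (x : ℝ) :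
    ContDiff ℝ (⊤ : ℕ∞) (fun t => f (x, t)) :=
  hf.comp (contDiff_const.prodMk contDiff_id)

lemma hasDerivAt_pd1 {f : ℝ × ℝ → ℝ} (hf : ContDiff ℝ (⊤ : ℕ∞) f) (x y : ℝ) :
    HasDerivAt (fun s => f (s, y)) (pd1 f (x, y)) x :=
  (((sliceH hf y).differentiable one_le_top') x).hasDerivAt

lemma hasDerivAt_pd2 {f : ℝ × ℝ → ℝ} (hf : ContDiff ℝ (⊤ : ℕ∞) f) (x y : ℝ) :
    HasDerivAt (fun t => f (x, t)) (pd2 f (x, y)) y :=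
  (((sliceV hf x).differentiable one_le_top') y).hasDerivAt

lemma pd1_eq_fderiv {f : ℝ × ℝ → ℝ} (hf : Differentiable ℝ f) (p : ℝ × ℝ) :
    pd1 f p = fderiv ℝ f p (1, 0) := by
  have h : HasDerivAt (fun s => f (s, p.2)) (fderiv ℝ f p (1, 0)) p.1 := by
    have hline : HasDerivAt (fun s : ℝ => (s, p.2)) ((1 : ℝ), (0 : ℝ)) p.1 :=
      (hasDerivAt_id p.1).prodMk (hasDerivAt_const p.1 p.2)
    exact ((hf p).hasFDerivAt.comp_hasDerivAt p.1 hline)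
  exact h.deriv

lemma pd2_eq_fderiv {f : ℝ × ℝ → ℝ} (hf : Differentiable ℝ f) (p : ℝ × ℝ) :
    pd2 f p = fderiv ℝ f p (0, 1) := by
  have h : HasDerivAt (fun t => f (p.1, t)) (fderiv ℝ f p (0, 1)) p.2 := by
    have hline : HasDerivAt (fun t : ℝ => (p.1, t)) ((0 : ℝ), (1 : ℝ)) p.2 :=
      (hasDerivAt_const p.2 p.1).prodMk (hasDerivAt_id p.2)
    exact ((hf p).hasFDerivAt.comp_hasDerivAt p.2 hline)
  exact h.deriv

lemma contDiff_pd1 {f : ℝ × ℝ → ℝ} (hf : ContDiff ℝ (⊤ : ℕ∞) f) :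
    ContDiff ℝ (⊤ : ℕ∞) (pd1 f) := by
  have : pd1 f = fun p => fderiv ℝ f p (1, 0) :=
    funext fun p => pd1_eq_fderiv (hf.differentiable one_le_top') p
  rw [this]
  exact (hf.fderiv_right top_add_one_le).clm_apply contDiff_const

lemma contDiff_pd2 {f : ℝ × ℝ → ℝ} (hf : ContDiff ℝ (⊤ : ℕ∞) f) :
    ContDiff ℝ (⊤ : ℕ∞) (pd2 f) := by
  have : pd2 f = fun p => fderiv ℝ f p (0, 1) :=
    funext fun p => pd2_eq_fderiv (hf.differentiable one_le_top') p
  rw [this]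
  exact (hf.fderiv_right top_add_one_le).clm_apply contDiff_const

lemma schwarz {f : ℝ × ℝ → ℝ} (hf : ContDiff ℝ (⊤ : ℕ∞) f) (p : ℝ × ℝ) :
    pd2 (pd1 f) p = pd1 (pd2 f) p := by
  have hdf : Differentiable ℝ f := hf.differentiable one_le_top'
  have hfd : ContDiff ℝ (⊤ : ℕ∞) (fderiv ℝ f) := hf.fderiv_right top_add_one_le
  have hdfd : Differentiable ℝ (fderiv ℝ f) := hfd.differentiable one_le_top'
  have h1 : pd1 f = fun q => fderiv ℝ f q (1, 0) := funext fun q => pd1_eq_fderiv hdf q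
  have h2 : pd2 f = fun q => fderiv ℝ f q (0, 1) := funext fun q => pd2_eq_fderiv hdf q
  have hsymm : fderiv ℝ (fderiv ℝ f) p (0, 1) (1, 0) = fderiv ℝ (fderiv ℝ f) p (1, 0) (0, 1) :=
    second_derivative_symmetric (fun y => (hdf y).hasFDerivAt) ((hdfd p).hasFDerivAt) _ _
  rw [h1, h2]
  have c1 : ContDiff ℝ (⊤ : ℕ∞) (fun q => fderiv ℝ f q (1, 0)) := hfd.clm_apply contDiff_const
  have c2 : ContDiff ℝ (⊤ : ℕ∞) (fun q => fderiv ℝ f q (0, 1)) := hfd.clm_apply contDiff_const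
  rw [pd2_eq_fderiv (c1.differentiable one_le_top'), pd1_eq_fderiv (c2.differentiable one_le_top')]
  rw [fderiv_clm_apply (hdfd p) (differentiableAt_const _),
      fderiv_clm_apply (hdfd p) (differentiableAt_const _)]
  simp [hsymm]

/-- **Reformulation of the Euler–Lagrange equation as a geometric wave equation
(Proposition 2.1).**  If `φ` is smooth with `g > 0`, `g̊ > 0` everywhere and satisfies
the Euler–Lagrange equation, then `□_g φ = S₀` at every point. -/
theorem euler_lagrange_geometric_wave_form
    (Ψ : ℝ → ℝ) (φ : ℝ × ℝ → ℝ)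
    (hΨ : ContDiff ℝ (⊤ : ℕ∞) Ψ) (hφ : ContDiff ℝ (⊤ : ℕ∞) φ)
    (hg : ∀ p : ℝ × ℝ, 0 < gmet Ψ φ p) (hgr : ∀ p : ℝ × ℝ, 0 < gring Ψ φ p)
    (hEL : ∀ p : ℝ × ℝ, ELexpr Ψ φ p = 0) :
    ∀ p : ℝ × ℝ, BoxG Ψ φ p = S0expr Ψ φ p := by
  intro p
  obtain ⟨x, y⟩ := p
  have hφ1 := contDiff_pd1 hφ
  have hφ2 := contDiff_pd2 hφ
  have hΨ' : ContDiff ℝ (⊤ : ℕ∞) (deriv Ψ) := (contDiff_infty_iff_deriv.mp hΨ).2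
  have hgxy := hg (x, y)
  have hsq : Real.sqrt (gmet Ψ φ (x, y)) ^ 2 = gmet Ψ φ (x, y) := Real.sq_sqrt hgxy.le
  have hspos : 0 < Real.sqrt (gmet Ψ φ (x, y)) := Real.sqrt_pos.2 hgxy
  have ha1 : HasDerivAt (fun s => pd1 φ (s, y)) (pd1 (pd1 φ) (x, y)) x :=
    hasDerivAt_pd1 hφ1 x y
  have hb1 : HasDerivAt (fun s => pd2 φ (s, y)) (pd1 (pd2 φ) (x, y)) x :=
    hasDerivAt_pd1 hφ2 x y
  have hψ1 : HasDerivAt (fun s => deriv Ψ s) (deriv (deriv Ψ) x) x :=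
    ((hΨ'.differentiable one_le_top') x).hasDerivAt
  have ha2 : HasDerivAt (fun t => pd1 φ (x, t)) (pd2 (pd1 φ) (x, y)) y :=
    hasDerivAt_pd2 hφ1 x y
  have hb2 : HasDerivAt (fun t => pd2 φ (x, t)) (pd2 (pd2 φ) (x, y)) y :=
    hasDerivAt_pd2 hφ2 x y
  have hgm1 : HasDerivAt (fun s => gmet Ψ φ (s, y)) _ x :=
    (((hasDerivAt_const x (1:ℝ)).sub ((ha1.const_mul 2).mul hb1)).sub
      ((hψ1.const_mul 2).mul hb1)).add ((hψ1.pow 2).mul (hb1.pow 2))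
  have hgm2 : HasDerivAt (fun t => gmet Ψ φ (x, t)) _ y :=
    (((hasDerivAt_const y (1:ℝ)).sub ((ha2.const_mul 2).mul hb2)).sub
      (hb2.const_mul (2 * deriv Ψ x))).add ((hb2.pow 2).const_mul ((deriv Ψ x)^2))
  have hI1 : HasDerivAt (fun s => (Real.sqrt (gmet Ψ φ (s, y)))⁻¹) _ x :=
    (hgm1.sqrt hgxy.ne').inv hspos.ne'
  have hI2 : HasDerivAt (fun t => (Real.sqrt (gmet Ψ φ (x, t)))⁻¹) _ y :=
    (hgm2.sqrt hgxy.ne').inv hspos.ne'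
  have hP' : pd1 (invSqrtg Ψ φ) (x, y) = _ := hI1.deriv
  have hQ' : pd2 (invSqrtg Ψ φ) (x, y) = _ := hI2.deriv
  have hFd' : pd1 (fun q => (-pd2 φ q + deriv Ψ q.1 * pd2 φ q ^ 2) * invSqrtg Ψ φ q) (x, y) = _ :=
    ((hb1.neg.add (hψ1.mul (hb1.pow 2))).mul hI1).deriv
  have hGd' : pd2 (fun q => (-pd1 φ q - deriv Ψ q.1 * pd1 φ q * pd2 φ q) * invSqrtg Ψ φ q) (x, y) = _ :=
    ((ha2.neg.sub ((ha2.const_mul (deriv Ψ x)).mul hb2)).mul hI2).deriv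
  have hE1' : pd1 (fun q => pd2 φ q * invSqrtg Ψ φ q) (x, y) = _ := (hb1.mul hI1).deriv
  have hE2' : pd2 (fun q => (pd1 φ q + deriv Ψ q.1 - (deriv Ψ q.1)^2 * pd2 φ q) * invSqrtg Ψ φ q) (x, y) = _ :=
    (((ha2.add_const (deriv Ψ x)).sub (hb2.const_mul ((deriv Ψ x)^2))).mul hI2).deriv
  have hFfun : (fun q => Real.sqrt (gmet Ψ φ q) * (guu Ψ φ q * pd1 φ q + guub Ψ φ q * pd2 φ q))
      = (fun q => (-pd2 φ q + deriv Ψ q.1 * pd2 φ q ^ 2) * invSqrtg Ψ φ q) := by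
    funext q
    have h0 := hg q
    have hsq' : Real.sqrt (gmet Ψ φ q) ^ 2 = gmet Ψ φ q := Real.sq_sqrt h0.le
    have hsp : 0 < Real.sqrt (gmet Ψ φ q) := Real.sqrt_pos.2 h0
    simp only [guu, guub, invSqrtg]
    field_simp
    linear_combination (-pd2 φ q + pd2 φ q ^ 2 * deriv Ψ q.1) * hsq'
  have hGfun : (fun q => Real.sqrt (gmet Ψ φ q) * (guub Ψ φ q * pd1 φ q + gubub Ψ φ q * pd2 φ q))
      = (fun q => (-pd1 φ q - deriv Ψ q.1 * pd1 φ q * pd2 φ q) * invSqrtg Ψ φ q) := by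
    funext q
    have h0 := hg q
    have hsq' : Real.sqrt (gmet Ψ φ q) ^ 2 = gmet Ψ φ q := Real.sq_sqrt h0.le
    have hsp : 0 < Real.sqrt (gmet Ψ φ q) := Real.sqrt_pos.2 h0
    simp only [guub, gubub, invSqrtg]
    field_simp
    linear_combination (((-1 + deriv Ψ q.1 * pd2 φ q + pd1 φ q * pd2 φ q) * pd1 φ q - (2 * deriv Ψ q.1 + pd1 φ q) * pd1 φ q * pd2 φ q) * gmet Ψ φ q + (-(deriv Ψ q.1 * pd2 φ q * pd1 φ q) + (deriv Ψ q.1 * pd2 φ q * pd1 φ q * gmet Ψ φ q - pd1 φ q) + pd1 φ q * gmet Ψ φ q)) * hsq'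
  have hEL2 := hEL (x, y)
  simp only [ELexpr] at hEL2
  rw [hE1', hE2'] at hEL2
  have hBC : pd2 (pd1 φ) (x, y) = pd1 (pd2 φ) (x, y) := schwarz hφ (x, y)
  simp only [BoxG, S0expr, gring]
  rw [hFfun, hGfun, hFd', hGd', hP', hQ',
    show invSqrtg Ψ φ (x, y) = (Real.sqrt (gmet Ψ φ (x, y)))⁻¹ from rfl]
  rw [hBC] at hEL2 ⊢
  set s := Real.sqrt (gmet Ψ φ (x, y)) with hs
  have hG2 : gmet Ψ φ (x, y) = s ^ 2 := hsq.symm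
  rw [hG2]
  have hs0 : s ≠ 0 := ne_of_gt hspos
  simp only [Pi.add_apply, Pi.sub_apply, Pi.neg_apply, Pi.mul_apply, Pi.pow_apply] at hEL2 ⊢
  linear_combination (norm := (field_simp; ring))
    (-(1 - deriv Ψ x * pd2 φ (x, y)) ^ 2 / s) * hEL2
end
end

section
/- Quadratic-form formulas and positivity for the energy–momentum tensor (core of Lemma 3.3). Let a, b, c, p, q be real numbers (in the application a = g^{uu}, b = g^{uū}, c = g^{ūū}, p = ∂_uψ, q = ∂_ūψ, so that the three quantities below are the contractions T[ψ](Dū,Dū), T[ψ](Du,Du) and T[ψ](Du,Dū)). Set Q := a·p² + 2·b·p·q + c·q². Then: (i) (c·q + b·p)² − (1/2)·c·Q = b²p² + (1/2)·c²q² + bc·pq − (1/2)·ac·p²; (ii) (a·p + b·q)² − (1/2)·a·Q = b²q² + (1/2)·a²p² + ab·pq − (1/2)·ac·q²; (iii) (a·p + b·q)·(b·p + c·q) − (1/2)·b·Q = (1/2)·ab·p² + (1/2)·bc·q² + ac·p·q. Moreover, if |a·c| ≤ b²/6, then (c·q + b·p)² − (1/2)·c·Q ≥ (1/6)·(b²p²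 + c²q²) and (a·p + b·q)² − (1/2)·a·Q ≥ (1/6)·(b²q² + a²p²). -/
/-- **Quadratic-form formulas and positivity for the energy–momentum tensor**
(core of Lemma 3.3).  With `a = g^{uu}`, `b = g^{uū}`, `c = g^{ūū}`, `p = ∂_uψ`, `q = ∂_ūψ`
and `Q = a·p² + 2·b·p·q + c·q²`, the three contractions `T[ψ](Dū,Dū)`, `T[ψ](Du,Du)`,
`T[ψ](Du,Dū)` have the stated expansions, and under `|a·c| ≤ b²/6` the first two are bounded
below by `(1/6)·(b²p² + c²q²)` and `(1/6)·(b²q² + a²p²)` respectively. -/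
theorem energy_momentum_quadratic_forms (a b c p q : ℝ) :
    ((c*q + b*p)^2 - (1/2)*c*(a*p^2 + 2*b*p*q + c*q^2)
        = b^2*p^2 + (1/2)*c^2*q^2 + b*c*p*q - (1/2)*a*c*p^2) ∧
    ((a*p + b*q)^2 - (1/2)*a*(a*p^2 + 2*b*p*q + c*q^2)
        = b^2*q^2 + (1/2)*a^2*p^2 + a*b*p*q - (1/2)*a*c*q^2) ∧
    ((a*p + b*q)*(b*p + c*q) - (1/2)*b*(a*p^2 + 2*b*p*q + c*q^2)
        = (1/2)*a*b*p^2 + (1/2)*b*c*q^2 + a*c*p*q) ∧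
    (|a*c| ≤ b^2/6 →
      ((1/6)*(b^2*p^2 + c^2*q^2) ≤ (c*q + b*p)^2 - (1/2)*c*(a*p^2 + 2*b*p*q + c*q^2)) ∧
      ((1/6)*(b^2*q^2 + a^2*p^2) ≤ (a*p + b*q)^2 - (1/2)*a*(a*p^2 + 2*b*p*q + c*q^2))) := by
  refine ⟨by ring, by ring, by ring, fun h => ?_⟩
  obtain ⟨h1, h2⟩ := abs_le.mp h
  constructor <;>
    nlinarith [sq_nonneg (3*b*p + 2*c*q), sq_nonneg (3*b*q + 2*a*p), sq_nonneg p, sq_nonneg q]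
end

section
/- Alternative reformulation of the Euler–Lagrange equation (Proposition A.1). Suppose φ is smooth, g > 0 everywhere, and φ satisfies the Euler–Lagrange equation ∂_u(∂_ūφ·g^{−1/2}) + ∂_ū((∂_uφ + Ψ'(u) − (Ψ'(u))²·∂_ūφ)·g^{−1/2}) = 0. Then at every point Box_g φ = S̃₀, where S̃₀ := (1/g²)·(1−g)·(Ψ'(u))²·∂_ū²φ + (1/g²)·(1−g)·Ψ'(u)·∂_uφ·∂_ū²φ − (1/g²)·(Ψ'(u))³·∂_ūφ·∂_ū²φ + (1/g²)·Ψ'(u)·∂_ūφ·∂_ū∂_uφ + (1/g)·Ψ'(u)·∂_ūφ·∂_u∂_ūφ − (1/√g)·(Ψ'(u))²·∂_ūφ·∂_ū(g^{−1/2}) + (1/g)·Ψ''(u)·(∂_ūφ)² + (1/√g)·Ψ'(u)·(∂_ūφ)²·∂_u(g^{−1/2}) − (1/√g)·Ψ'(u)·∂_ūφ·∂_uφ·∂_ū(g^{−1/2}). -/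
noncomputable section

namespace ELAux

lemma hasDerivAt_slice1 {f : ℝ × ℝ → ℝ} {u v : ℝ} (hf : DifferentiableAt ℝ f (u, v)) :
    HasDerivAt (fun s => f (s, v)) (pd1 f (u, v)) u := by
  have h : DifferentiableAt ℝ (fun s : ℝ => f (s, v)) u :=
    hf.comp u (differentiableAt_fun_id.prodMk (differentiableAt_const _))
  exact h.hasDerivAt

lemma hasDerivAt_slice2 {f : ℝ × ℝ → ℝ} {u v : ℝ} (hf : DifferentiableAt ℝ f (u, v)) :
    HasDerivAt (fun s => f (u, s)) (pd2 f (u, v)) v := by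
  have h : DifferentiableAt ℝ (fun s : ℝ => f (u, s)) v :=
    hf.comp v ((differentiableAt_const _).prodMk differentiableAt_fun_id)
  exact h.hasDerivAt

lemma pd1_eq {f : ℝ × ℝ → ℝ} (hf : Differentiable ℝ f) :
    pd1 f = fun q => fderiv ℝ f q (1, 0) := by
  funext q
  exact (((hf q).hasFDerivAt).comp_hasDerivAt q.1
    ((hasDerivAt_id q.1).prodMk (hasDerivAt_const q.1 q.2))).deriv

lemma pd2_eq {f : ℝ × ℝ → ℝ} (hf : Differentiable ℝ f) :
    pd2 f = fun q => fderiv ℝ f q (0, 1) := by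
  funext q
  exact (((hf q).hasFDerivAt).comp_hasDerivAt q.2
    ((hasDerivAt_const q.2 q.1).prodMk (hasDerivAt_id q.2))).deriv

lemma top_le : ((⊤:ℕ∞) : WithTop ℕ∞) + 1 ≤ ((⊤:ℕ∞) : WithTop ℕ∞) := by simp

lemma one_le_top : (1 : WithTop ℕ∞) ≤ ((⊤:ℕ∞) : WithTop ℕ∞) := by exact_mod_cast le_top

lemma contDiff_pd1 {f : ℝ × ℝ → ℝ} (hf : ContDiff ℝ (⊤:ℕ∞) f) :
    ContDiff ℝ (⊤:ℕ∞) (pd1 f) := by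
  rw [pd1_eq (hf.differentiable (by simp))]
  exact (hf.fderiv_right top_le).clm_apply contDiff_const

lemma contDiff_pd2 {f : ℝ × ℝ → ℝ} (hf : ContDiff ℝ (⊤:ℕ∞) f) :
    ContDiff ℝ (⊤:ℕ∞) (pd2 f) := by
  rw [pd2_eq (hf.differentiable (by simp))]
  exact (hf.fderiv_right top_le).clm_apply contDiff_const

lemma contDiff_derivPsi {Ψ : ℝ → ℝ} (hΨ : ContDiff ℝ (⊤:ℕ∞) Ψ) :
    ContDiff ℝ (⊤:ℕ∞) (deriv Ψ) := by
  have h : deriv Ψ = fun x => fderiv ℝ Ψ x 1 := rfl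
  rw [h]
  exact (hΨ.fderiv_right top_le).clm_apply contDiff_const

lemma clairaut {f : ℝ × ℝ → ℝ} (hf : ContDiff ℝ (⊤:ℕ∞) f) (u v : ℝ) :
    pd2 (pd1 f) (u, v) = pd1 (pd2 f) (u, v) := by
  have hd : Differentiable ℝ f := hf.differentiable (by simp)
  have hΦ : Differentiable ℝ (fderiv ℝ f) :=
    (hf.fderiv_right top_le).differentiable (by simp)
  have hsymm := second_derivative_symmetric (f := f) (f' := fderiv ℝ f)
    (f'' := fderiv ℝ (fderiv ℝ f) (u, v)) (x := (u, v))
    (fun y => (hd y).hasFDerivAt) (hΦ (u, v)).hasFDerivAt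
  have h1 : pd2 (pd1 f) (u, v)
      = fderiv ℝ (fderiv ℝ f) (u, v) (0, 1) (1, 0) := by
    rw [pd1_eq hd]
    have hc : HasDerivAt (fun s : ℝ => fderiv ℝ f (u, s))
        (fderiv ℝ (fderiv ℝ f) (u, v) (0, 1)) v :=
      ((hΦ (u, v)).hasFDerivAt).comp_hasDerivAt v
        ((hasDerivAt_const v u).prodMk (hasDerivAt_id v))
    have := (hc.clm_apply (hasDerivAt_const v ((1:ℝ), (0:ℝ)))).deriv
    simpa [pd2] using this
  have h2 : pd1 (pd2 f) (u, v)
      = fderiv ℝ (fderiv ℝ f) (u, v) (1, 0) (0, 1) := by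
    rw [pd2_eq hd]
    have hc : HasDerivAt (fun s : ℝ => fderiv ℝ f (s, v))
        (fderiv ℝ (fderiv ℝ f) (u, v) (1, 0)) u :=
      ((hΦ (u, v)).hasFDerivAt).comp_hasDerivAt u
        ((hasDerivAt_id u).prodMk (hasDerivAt_const u v))
    have := (hc.clm_apply (hasDerivAt_const u ((0:ℝ), (1:ℝ)))).deriv
    simpa [pd1] using this
  rw [h1, h2, hsymm (0, 1) (1, 0)]

lemma aux1 (s a b c : ℝ) (hs : s ≠ 0) :
    s * (-b ^ 2 / s ^ 2 * a + (-1 + c * b + a * b) / s ^ 2 * b)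
      = b * s⁻¹ * (c * b - 1) := by
  field_simp; ring

lemma aux2 (s a b c : ℝ) (hs : s ≠ 0) :
    s * ((-1 + c * b + a * b) / s ^ 2 * a + -((2 * c + a) * a) / s ^ 2 * b)
      = -(a * s⁻¹ * (1 + c * b)) := by
  field_simp; ring

end ELAux

/-- **Alternative reformulation of the Euler–Lagrange equation (Proposition A.1).**
If `φ` is smooth with `g > 0` everywhere and satisfies the Euler–Lagrange equation,
then `□_g φ = S̃₀` at every point. -/

theorem euler_lagrange_alternative_form
    (Ψ : ℝ → ℝ) (φ : ℝ × ℝ → ℝ)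
    (hΨ : ContDiff ℝ (⊤ : ℕ∞) Ψ) (hφ : ContDiff ℝ (⊤ : ℕ∞) φ)
    (hg : ∀ p : ℝ × ℝ, 0 < gmet Ψ φ p)
    (hEL : ∀ p : ℝ × ℝ, ELexpr Ψ φ p = 0) :
    ∀ p : ℝ × ℝ, BoxG Ψ φ p = S0tilde Ψ φ p := by
  rintro ⟨u, v⟩
  have hone : ((⊤:ℕ∞) : WithTop ℕ∞) ≠ 0 := by simp
  have hφd : Differentiable ℝ φ := hφ.differentiable hone
  have hF1c : ContDiff ℝ (⊤:ℕ∞) (pd1 φ) := ELAux.contDiff_pd1 hφ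
  have hF2c : ContDiff ℝ (⊤:ℕ∞) (pd2 φ) := ELAux.contDiff_pd2 hφ
  have hψc : ContDiff ℝ (⊤:ℕ∞) (fun q : ℝ × ℝ => deriv Ψ q.1) :=
    (ELAux.contDiff_derivPsi hΨ).comp contDiff_fst
  have hGc : ContDiff ℝ (⊤:ℕ∞) (gmet Ψ φ) := by
    unfold gmet
    exact ((contDiff_const.sub ((contDiff_const.mul hF1c).mul hF2c)).sub
      ((contDiff_const.mul hψc).mul hF2c)).add ((hψc.pow 2).mul (hF2c.pow 2))
  have hgq := hg (u, v)
  have hsq_pos : 0 < Real.sqrt (gmet Ψ φ (u, v)) := Real.sqrt_pos.mpr hgq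
  have hWc : ContDiffAt ℝ (⊤:ℕ∞) (invSqrtg Ψ φ) (u, v) := by
    have h1 : ContDiffAt ℝ (⊤:ℕ∞) (fun q => Real.sqrt (gmet Ψ φ q)) (u, v) :=
      (Real.contDiffAt_sqrt hgq.ne').comp (u, v) hGc.contDiffAt
    exact h1.inv hsq_pos.ne'
  have hdF1 : DifferentiableAt ℝ (pd1 φ) (u, v) := (hF1c.differentiable hone) _
  have hdF2 : DifferentiableAt ℝ (pd2 φ) (u, v) := (hF2c.differentiable hone) _
  have hdG : DifferentiableAt ℝ (gmet Ψ φ) (u, v) := (hGc.differentiable hone) _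
  have hdW : DifferentiableAt ℝ (invSqrtg Ψ φ) (u, v) := hWc.differentiableAt hone
  have hF1_2 := ELAux.hasDerivAt_slice2 hdF1
  have hF2_1 := ELAux.hasDerivAt_slice1 hdF2
  have hF2_2 := ELAux.hasDerivAt_slice2 hdF2
  have hW_1 := ELAux.hasDerivAt_slice1 hdW
  have hW_2 := ELAux.hasDerivAt_slice2 hdW
  have hG_2 := ELAux.hasDerivAt_slice2 hdG
  have hψ1 : HasDerivAt (deriv Ψ) (deriv (deriv Ψ) u) u :=
    (((ELAux.contDiff_derivPsi hΨ).differentiable hone) u).hasDerivAt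
  have e1 : (fun q => Real.sqrt (gmet Ψ φ q) * (guu Ψ φ q * pd1 φ q + guub Ψ φ q * pd2 φ q))
      = fun q => pd2 φ q * invSqrtg Ψ φ q * (deriv Ψ q.1 * pd2 φ q - 1) := by
    funext q
    have hq := hg q
    have hs : Real.sqrt (gmet Ψ φ q) ≠ 0 := (Real.sqrt_pos.mpr hq).ne'
    have h := ELAux.aux1 (Real.sqrt (gmet Ψ φ q)) (pd1 φ q) (pd2 φ q) (deriv Ψ q.1) hs
    rw [Real.sq_sqrt hq.le] at h
    simpa only [guu, guub, invSqrtg] using h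
  have e2 : (fun q => Real.sqrt (gmet Ψ φ q) * (guub Ψ φ q * pd1 φ q + gubub Ψ φ q * pd2 φ q))
      = fun q => -(pd1 φ q * invSqrtg Ψ φ q * (1 + deriv Ψ q.1 * pd2 φ q)) := by
    funext q
    have hq := hg q
    have hs : Real.sqrt (gmet Ψ φ q) ≠ 0 := (Real.sqrt_pos.mpr hq).ne'
    have h := ELAux.aux2 (Real.sqrt (gmet Ψ φ q)) (pd1 φ q) (pd2 φ q) (deriv Ψ q.1) hs
    rw [Real.sq_sqrt hq.le] at h
    simpa only [guub, gubub, invSqrtg] using h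
  have hP1 : pd1 (fun q => pd2 φ q * invSqrtg Ψ φ q * (deriv Ψ q.1 * pd2 φ q - 1)) (u, v)
      = (pd1 (pd2 φ) (u, v) * invSqrtg Ψ φ (u, v)
          + pd2 φ (u, v) * pd1 (invSqrtg Ψ φ) (u, v)) * (deriv Ψ u * pd2 φ (u, v) - 1)
        + pd2 φ (u, v) * invSqrtg Ψ φ (u, v)
          * (deriv (deriv Ψ) u * pd2 φ (u, v) + deriv Ψ u * pd1 (pd2 φ) (u, v)) :=
    ((hF2_1.mul hW_1).mul ((hψ1.mul hF2_1).sub_const 1)).deriv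
  have hP2 : pd2 (fun q => -(pd1 φ q * invSqrtg Ψ φ q * (1 + deriv Ψ q.1 * pd2 φ q))) (u, v)
      = -((pd2 (pd1 φ) (u, v) * invSqrtg Ψ φ (u, v)
            + pd1 φ (u, v) * pd2 (invSqrtg Ψ φ) (u, v)) * (1 + deriv Ψ u * pd2 φ (u, v))
          + pd1 φ (u, v) * invSqrtg Ψ φ (u, v) * (deriv Ψ u * pd2 (pd2 φ) (u, v))) :=
    (((hF1_2.mul hW_2).mul ((hF2_2.const_mul (deriv Ψ u)).const_add 1)).neg).deriv
  have hQ1 : pd1 (fun q => pd2 φ q * invSqrtg Ψ φ q) (u, v)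
      = pd1 (pd2 φ) (u, v) * invSqrtg Ψ φ (u, v)
        + pd2 φ (u, v) * pd1 (invSqrtg Ψ φ) (u, v) :=
    (hF2_1.mul hW_1).deriv
  have hQ2 : pd2 (fun q => (pd1 φ q + deriv Ψ q.1 - (deriv Ψ q.1)^2 * pd2 φ q)
        * invSqrtg Ψ φ q) (u, v)
      = (pd2 (pd1 φ) (u, v) - (deriv Ψ u)^2 * pd2 (pd2 φ) (u, v)) * invSqrtg Ψ φ (u, v)
        + (pd1 φ (u, v) + deriv Ψ u - (deriv Ψ u)^2 * pd2 φ (u, v))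
          * pd2 (invSqrtg Ψ φ) (u, v) :=
    (((hF1_2.add_const (deriv Ψ u)).sub (hF2_2.const_mul ((deriv Ψ u)^2))).mul hW_2).deriv
  have hGval : pd2 (gmet Ψ φ) (u, v)
      = -(2 * pd1 φ (u, v) * pd2 (pd2 φ) (u, v)) - 2 * pd2 (pd1 φ) (u, v) * pd2 φ (u, v)
        - 2 * deriv Ψ u * pd2 (pd2 φ) (u, v)
        + 2 * (deriv Ψ u)^2 * pd2 φ (u, v) * pd2 (pd2 φ) (u, v) := by
    have H := (((hasDerivAt_const v (1:ℝ)).sub ((hF1_2.const_mul 2).mul hF2_2)).sub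
      (hF2_2.const_mul (2 * deriv Ψ u))).add ((hF2_2.pow 2).const_mul ((deriv Ψ u)^2))
    exact H.deriv.trans (by push_cast; ring)
  have hWub : pd2 (invSqrtg Ψ φ) (u, v)
      = -(pd2 (gmet Ψ φ) (u, v)) / (2 * Real.sqrt (gmet Ψ φ (u, v)) ^ 3) := by
    have H := ((Real.hasDerivAt_sqrt hgq.ne').comp v hG_2).inv hsq_pos.ne'
    refine H.deriv.trans ?_
    rw [show ((fun x => Real.sqrt x) ∘ fun s => gmet Ψ φ (u, s)) v
        = Real.sqrt (gmet Ψ φ (u, v)) from rfl]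
    field_simp
  have hEL' := hEL (u, v)
  simp only [ELexpr] at hEL'
  rw [hQ1, hQ2, hWub, hGval, ELAux.clairaut hφ u v] at hEL'
  show BoxG Ψ φ (u, v) = S0tilde Ψ φ (u, v)
  simp only [BoxG, S0tilde]
  rw [e1, e2, hP1, hP2, hWub, hGval, ELAux.clairaut hφ u v]
  rw [show invSqrtg Ψ φ (u, v) = (Real.sqrt (gmet Ψ φ (u, v)))⁻¹ from rfl] at hEL' ⊢
  set s : ℝ := Real.sqrt (gmet Ψ φ (u, v)) with hs_def
  have hs2' : s ^ 2 = gmet Ψ φ (u, v) := by rw [hs_def]; exact Real.sq_sqrt hgq.le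
  have hsne : s ≠ 0 := hsq_pos.ne'
  rw [show gmet Ψ φ (u, v) = s ^ 2 from hs2'.symm]
  have hrel : s ^ 2
      = 1 - 2 * pd1 φ (u, v) * pd2 φ (u, v) - 2 * deriv Ψ u * pd2 φ (u, v)
        + (deriv Ψ u)^2 * (pd2 φ (u, v))^2 := hs2'.trans rfl
  field_simp at hEL' ⊢
  linear_combination (-1) * hEL'
end
end
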